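/- Let P be an m×m stochastic matrix whose eigenvalue 1 is simple and all other eigenvalues have modulus strictly less than 1, with stationary distribution π, and let θ : [m] → ℝ be any function. Then the linear system (P − I)ω = −(P − Jπᵀ)θ, πᵀω = 0 (where J is the all-ones column vector) has a unique solution ω : [m] → ℝ. -/

import Mathlib

open Finset Polynomial Matrix

lemma charpoly_sub_smul_one' {n : ℕ} (M : Matrix (Fin n) (Fin n) ℂ) (c : ℂ) :
    (M - c • 1).charpoly = M.charpoly.comp (X + C c) := by
  rw [comp_eq_aeval, Matrix.charpoly, Matrix.charpoly, AlgHom.map_det]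
  congr 1
  ext i j
  rcases eq_or_ne i j with rfl | h
  · simp [charmatrix_apply_eq, Matrix.sub_apply, Matrix.smul_apply, Matrix.one_apply]
    ring
  · simp [charmatrix_apply_ne _ _ _ h, Matrix.sub_apply, Matrix.smul_apply, Matrix.one_apply_ne h]

lemma charpoly_mulVecLin' {n : ℕ} (M : Matrix (Fin n) (Fin n) ℂ) :
    (Matrix.mulVecLin M : Module.End ℂ (Fin n → ℂ)).charpoly = M.charpoly := by
  have h := LinearMap.charpoly_toMatrix M.mulVecLin (Pi.basisFun ℂ (Fin n))
  rw [LinearMap.toMatrix_eq_toMatrix'] at h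
  rw [← h, ← Matrix.toLin'_apply' M, LinearMap.toMatrix'_toLin']

lemma ker_dim_le_one' {n : ℕ} (Q : Matrix (Fin n) (Fin n) ℂ)
    (hsimple : Polynomial.rootMultiplicity (1 : ℂ) Q.charpoly = 1) :
    Module.finrank ℂ (LinearMap.ker (Q - 1).mulVecLin) ≤ 1 := by
  set φ : Module.End ℂ (Fin n → ℂ) := (Q - 1).mulVecLin with hφ
  have hsub : LinearMap.ker φ ≤ φ.maxGenEigenspace 0 := by
    intro x hx
    rw [Module.End.mem_maxGenEigenspace]
    exact ⟨1, by simpa using hx⟩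
  have hdim : Module.finrank ℂ (φ.maxGenEigenspace 0) = 1 := by
    rw [LinearMap.finrank_maxGenEigenspace_zero_eq]
    have h1 : φ.charpoly = (Q - 1).charpoly := charpoly_mulVecLin' _
    have h2 : (Q - 1).charpoly = Q.charpoly.comp (X + C 1) := by
      rw [← charpoly_sub_smul_one' Q 1, one_smul]
    rw [h1, h2, ← rootMultiplicity_eq_natTrailingDegree, hsimple]
  calc Module.finrank ℂ (LinearMap.ker φ)
      ≤ Module.finrank ℂ (φ.maxGenEigenspace 0) := Submodule.finrank_mono hsub
    _ = 1 := hdim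


/-- The discrete Poisson equation underlying the Markov version of Wald's identity: if `P` is a
stochastic matrix whose eigenvalue `1` is simple (algebraic multiplicity one) and whose other
eigenvalues have modulus strictly less than one, with stationary distribution `π`, then for any
`θ : Fin m → ℝ` the system `(P − I) ω = −(P − J πᵀ) θ`, `πᵀ ω = 0` has a unique solution. -/
theorem poisson_equation_unique_solution (m : ℕ)
    (P : Matrix (Fin m) (Fin m) ℝ) (π θ : Fin m → ℝ)
    (hPnn : ∀ i j, 0 ≤ P i j) (hProw : ∀ i, ∑ j, P i j = 1)
    -- eigenvalue 1 is simple: it is a root of the characteristic polynomial of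
    -- (algebraic) multiplicity exactly one
    (hsimple : Polynomial.rootMultiplicity (1 : ℂ)
      (Matrix.charpoly (P.map (Complex.ofReal : ℝ → ℂ))) = 1)
    -- all other eigenvalues have modulus strictly less than 1
    (hspec : ∀ z : ℂ, (Matrix.charpoly (P.map (Complex.ofReal : ℝ → ℂ))).IsRoot z →
      z ≠ 1 → ‖z‖ < 1)
    (hπnn : ∀ i, 0 ≤ π i) (hπsum : ∑ i, π i = 1)
    (hstat : ∀ j, ∑ i, π i * P i j = π j) :
    ∃! ω : Fin m → ℝ,
      (P - 1).mulVec ω = -((P - Matrix.of fun _ j => π j).mulVec θ) ∧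
        ∑ i, π i * ω i = 0 := by
  have hm : Nonempty (Fin m) := by
    rcases Nat.eq_zero_or_pos m with rfl | hm
    · simp at hπsum
    · exact ⟨⟨0, hm⟩⟩
  set N : Matrix (Fin m) (Fin m) ℝ := Matrix.of fun _ j => π j with hNdef
  set A : Matrix (Fin m) (Fin m) ℝ := 1 - P + N with hAdef
  set b : Fin m → ℝ := (P - N).mulVec θ with hbdef
  have hN0 : ∀ x : Fin m → ℝ, (∑ j, π j * x j = 0) → N.mulVec x = 0 := by
    intro x hx
    funext i
    simpa [N, Matrix.mulVec, dotProduct] using hx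
  have hcol : ∀ j, ∑ i, π i * A i j = π j := by
    intro j
    have h1 : ∑ i, π i * (1 : Matrix (Fin m) (Fin m) ℝ) i j = π j := by
      simp [Matrix.one_apply, mul_ite]
    have : ∑ i, π i * A i j
        = ∑ i, (π i * (1 : Matrix (Fin m) (Fin m) ℝ) i j - π i * P i j + π i * π j) := by
      apply Finset.sum_congr rfl
      intro i _
      simp [A, N, Matrix.add_apply, Matrix.sub_apply]
      ring
    rw [this, Finset.sum_add_distrib, Finset.sum_sub_distrib, h1, hstat j, ← Finset.sum_mul,
      hπsum, one_mul]
    ring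
  have hkey : ∀ x : Fin m → ℝ, ∑ i, π i * (A.mulVec x) i = ∑ i, π i * x i := by
    intro x
    have : ∑ i, π i * (A.mulVec x) i = ∑ i, ∑ j, π i * (A i j * x j) := by
      simp [Matrix.mulVec, dotProduct, Finset.mul_sum]
    rw [this, Finset.sum_comm]
    apply Finset.sum_congr rfl
    intro j _
    rw [← hcol j, Finset.sum_mul]
    apply Finset.sum_congr rfl
    intro i _
    ring
  have hπb : ∑ i, π i * b i = 0 := by
    have h0 : ∑ i, π i * b i = ∑ i, ∑ j, π i * ((P i j - π j) * θ j) := by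
      simp [b, N, Matrix.mulVec, dotProduct, Finset.mul_sum, Matrix.sub_apply]
    rw [h0, Finset.sum_comm]
    apply Finset.sum_eq_zero
    intro j _
    calc ∑ i, π i * ((P i j - π j) * θ j)
        = ∑ i, (π i * P i j - π i * π j) * θ j := by
          apply Finset.sum_congr rfl; intro i _; ring
      _ = (∑ i, (π i * P i j - π i * π j)) * θ j := by rw [Finset.sum_mul]
      _ = ((∑ i, π i * P i j) - ∑ i, π i * π j) * θ j := by rw [Finset.sum_sub_distrib]
      _ = 0 := by rw [hstat j, ← Finset.sum_mul, hπsum, one_mul, sub_self, zero_mul]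
  have hker : ∀ x : Fin m → ℝ, P.mulVec x = x → (∑ i, π i * x i = 0) → x = 0 := by
    intro x hPx hπx
    set Q : Matrix (Fin m) (Fin m) ℂ := P.map (Complex.ofReal : ℝ → ℂ) with hQdef
    set v : Fin m → ℂ := fun i => (x i : ℂ) with hvdef
    set one : Fin m → ℂ := fun _ => (1 : ℂ) with honedef
    have hone_mem : one ∈ LinearMap.ker (Q - 1).mulVecLin := by
      rw [LinearMap.mem_ker, Matrix.mulVecLin_apply, Matrix.sub_mulVec, Matrix.one_mulVec,
        sub_eq_zero]
      funext i
      have hrow := congrArg (Complex.ofReal : ℝ → ℂ) (hProw i)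
      push_cast at hrow
      simpa [Matrix.mulVec, dotProduct, one, Q] using hrow
    have hv_mem : v ∈ LinearMap.ker (Q - 1).mulVecLin := by
      rw [LinearMap.mem_ker, Matrix.mulVecLin_apply, Matrix.sub_mulVec, Matrix.one_mulVec,
        sub_eq_zero]
      funext i
      have hPxi : ∑ j, P i j * x j = x i := congrFun hPx i
      have h3 := congrArg (Complex.ofReal : ℝ → ℂ) hPxi
      push_cast at h3
      simpa [Matrix.mulVec, dotProduct, v, Q] using h3
    have hone_ne : one ≠ 0 := by
      intro h
      have := congrFun h (Classical.arbitrary (Fin m))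
      simp [one] at this
    have hspan : Submodule.span ℂ {one} = LinearMap.ker (Q - 1).mulVecLin := by
      apply Submodule.eq_of_le_of_finrank_le
      · rwa [Submodule.span_singleton_le_iff_mem]
      · rw [finrank_span_singleton hone_ne]
        exact ker_dim_le_one' Q hsimple
    have hv_span : v ∈ Submodule.span ℂ {one} := hspan ▸ hv_mem
    obtain ⟨c, hc⟩ := Submodule.mem_span_singleton.mp hv_span
    have hc0 : c = 0 := by
      have h1 : ∑ i, (π i : ℂ) * v i = 0 := by
        have := congrArg (Complex.ofReal : ℝ → ℂ) hπx
        push_cast at this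
        simpa [v] using this
      rw [← hc] at h1
      have h2 : (∑ i, (π i : ℂ)) * c = 0 := by
        rw [Finset.sum_mul, ← h1]
        apply Finset.sum_congr rfl
        intro i _
        simp [one]
      have h3 : (∑ i, (π i : ℂ)) = 1 := by
        have := congrArg (Complex.ofReal : ℝ → ℂ) hπsum
        push_cast at this
        exact this
      rwa [h3, one_mul] at h2
    funext i
    have hv0 : (x i : ℂ) = 0 := by
      have : v i = 0 := by rw [← hc, hc0]; simp
      simpa [v] using this
    simpa using Complex.ofReal_eq_zero.mp hv0
  have hinj : Function.Injective A.mulVecLin := by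
    rw [← LinearMap.ker_eq_bot, LinearMap.ker_eq_bot']
    intro x hx
    rw [Matrix.mulVecLin_apply] at hx
    have hπx : ∑ i, π i * x i = 0 := by
      rw [← hkey x, hx]
      simp
    have hNx : N.mulVec x = 0 := hN0 x hπx
    have h1 : A.mulVec x = x - P.mulVec x + N.mulVec x := by
      simp [A, Matrix.add_mulVec, Matrix.sub_mulVec, Matrix.one_mulVec]
    rw [hx, hNx, add_zero] at h1
    have hPx : P.mulVec x = x := (sub_eq_zero.mp h1.symm).symm
    exact hker x hPx hπx
  have hsurj : Function.Surjective A.mulVecLin :=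
    (LinearMap.injective_iff_surjective).mp hinj
  obtain ⟨ω, hω⟩ := hsurj b
  rw [Matrix.mulVecLin_apply] at hω
  have hπω : ∑ i, π i * ω i = 0 := by rw [← hkey ω, hω]; exact hπb
  have hNω : N.mulVec ω = 0 := hN0 ω hπω
  have hexp : A.mulVec ω = ω - P.mulVec ω + N.mulVec ω := by
    simp [A, Matrix.add_mulVec, Matrix.sub_mulVec, Matrix.one_mulVec]
  rw [hω, hNω, add_zero] at hexp
  have heq : (P - 1).mulVec ω = -b := by
    rw [Matrix.sub_mulVec, Matrix.one_mulVec, ← neg_sub, hexp]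
  refine ⟨ω, ⟨heq, hπω⟩, ?_⟩
  intro ω' ⟨h1', h2'⟩
  apply hinj
  rw [Matrix.mulVecLin_apply, Matrix.mulVecLin_apply, hω]
  have hNω' : N.mulVec ω' = 0 := hN0 ω' h2'
  have hexp' : A.mulVec ω' = ω' - P.mulVec ω' + N.mulVec ω' := by
    simp [A, Matrix.add_mulVec, Matrix.sub_mulVec, Matrix.one_mulVec]
  rw [hNω', add_zero] at hexp'
  rw [hexp']
  rw [Matrix.sub_mulVec, Matrix.one_mulVec] at h1'
  rw [← neg_sub, h1', neg_neg]
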